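/- Let δ* > δ > 0 with δ*/δ ∈ ℤ. Let x ∈ ℝⁿ, and for each r ∈ [-δ*/2, δ*/2), let x*_{r} be an arbitrary point of the shifted lattice δ*ℤⁿ + r·1. Let Q_δ be the quantization-by-random-shift operator at resolution δ (with shift r' ∼ Unif([-δ/2, δ/2)) applied to all coordinates using a single random scalar). Then E[‖Q_δ(x) - x‖₂²] ≤ (δ/δ*) · E_{r ∼ Unif([-δ*/2, δ*/2))}[‖x*_{r} - x‖₂²]. -/

import Mathlib

open MeasureTheory

lemma saw_meas (δ a : ℝ) :
    Measurable (fun r : ℝ => (δ * ((round ((a - r) / δ) : ℤ) : ℝ) + r - a) ^ 2) := by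
  have h1 : Measurable fun r : ℝ => (round ((a - r) / δ) : ℤ) := by
    simp only [round_eq]
    exact ((measurable_const.sub measurable_id).div_const δ |>.add_const _).floor
  exact (((measurable_const.mul (measurable_from_top.comp h1 : Measurable fun r : ℝ => ((round ((a - r) / δ) : ℤ) : ℝ))).add
    measurable_id).sub measurable_const).pow_const 2

lemma saw_integrable (δ a c d : ℝ) (hδ : 0 < δ) :
    IntegrableOn (fun r : ℝ => (δ * ((round ((a - r) / δ) : ℤ) : ℝ) + r - a) ^ 2)
      (Set.Ico c d) volume := by
  apply Measure.integrableOn_of_bounded (M := (δ/2)^2) measure_Ico_lt_top.ne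
    (saw_meas δ a).aestronglyMeasurable
  filter_upwards with r
  have h := abs_sub_round ((a - r) / δ)
  have hb : |δ * ((round ((a - r) / δ) : ℤ) : ℝ) + r - a| ≤ δ / 2 := by
    have : δ * ((round ((a - r) / δ) : ℤ) : ℝ) + r - a
        = -(δ * ((a - r) / δ - ((round ((a - r) / δ) : ℤ) : ℝ))) := by
      field_simp
      ring
    rw [this, abs_neg, abs_mul, abs_of_pos hδ]
    calc δ * |(a - r) / δ - ((round ((a - r) / δ) : ℤ) : ℝ)| ≤ δ * (1/2) := by
          exact mul_le_mul_of_nonneg_left h hδ.le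
      _ = δ / 2 := by ring
  rw [Real.norm_eq_abs, abs_pow]
  exact pow_le_pow_left₀ (abs_nonneg _) hb 2

lemma saw_integral (δ a : ℝ) (hδ : 0 < δ) :
    ∫ r in Set.Ico (-δ/2) (δ/2),
      (δ * ((round ((a - r) / δ) : ℤ) : ℝ) + r - a) ^ 2 = δ ^ 3 / 12 := by
  have hle : -δ/2 ≤ δ/2 := by linarith
  set h : ℝ → ℝ := fun s => (δ * ((round (s / δ) : ℤ) : ℝ) - s) ^ 2 with hh
  have hper : Function.Periodic h δ := by
    intro s
    simp only [hh]
    have : (s + δ) / δ = s / δ + 1 := by field_simp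
    rw [this, round_add_one]
    push_cast
    ring_nf
  have key : (fun r : ℝ => (δ * ((round ((a - r) / δ) : ℤ) : ℝ) + r - a) ^ 2)
      = fun r => h (a - r) := by
    funext r; simp only [hh]; ring_nf
  rw [MeasureTheory.restrict_Ico_eq_restrict_Ioc, key,
    ← intervalIntegral.integral_of_le hle, intervalIntegral.integral_comp_sub_left h a]
  have hb1 : a - δ/2 = (a - δ/2) := rfl
  have hb2 : a - -δ/2 = (a - δ/2) + δ := by ring
  rw [hb2, hper.intervalIntegral_add_eq (a - δ/2) (-δ/2)]
  have hb3 : -δ/2 + δ = δ/2 := by ring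
  rw [hb3]
  have hcong : Set.EqOn h (fun s => s ^ 2) (Set.uIcc (-δ/2) (δ/2)) := by
    intro s hs
    rw [Set.uIcc_of_le hle] at hs
    simp only [hh]
    rcases eq_or_lt_of_le hs.2 with he | hlt
    · rw [he]
      have : (δ/2) / δ = 1/2 := by field_simp
      rw [this]
      have : round ((1:ℝ)/2) = 1 := by
        rw [round_eq]; norm_num
      rw [this]
      push_cast; ring
    · have h0 : round (s / δ) = 0 := by
        rw [round_eq_zero_iff]
        constructor
        · rw [neg_div] at hs
          have := hs.1
          rw [le_div_iff₀ hδ] at *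
          nlinarith [hs.1]
        · rw [div_lt_iff₀ hδ]; linarith
      rw [h0]
      push_cast; ring
  rw [intervalIntegral.integral_congr hcong, integral_pow]
  ring

lemma saw_pt_le (δs t : ℝ) (hδs : 0 < δs) (k : ℤ) :
    (δs * ((round (t / δs) : ℤ) : ℝ) - t) ^ 2 ≤ (δs * (k : ℝ) - t) ^ 2 := by
  have h := round_le (t / δs) k
  have h1 : |δs * ((round (t / δs) : ℤ) : ℝ) - t| ≤ |δs * (k : ℝ) - t| := by
    have e1 : δs * ((round (t / δs) : ℤ) : ℝ) - t
        = -(δs * (t / δs - ((round (t / δs) : ℤ) : ℝ))) := by field_simp; ring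
    have e2 : δs * (k : ℝ) - t = -(δs * (t / δs - (k : ℝ))) := by field_simp; ring
    rw [e1, e2, abs_neg, abs_neg, abs_mul, abs_mul]
    exact mul_le_mul_of_nonneg_left h (abs_nonneg _)
  calc (δs * ((round (t / δs) : ℤ) : ℝ) - t) ^ 2
      = |δs * ((round (t / δs) : ℤ) : ℝ) - t| ^ 2 := (sq_abs _).symm
    _ ≤ |δs * (k : ℝ) - t| ^ 2 := pow_le_pow_left₀ (abs_nonneg _) h1 2
    _ = (δs * (k : ℝ) - t) ^ 2 := sq_abs _
/-- Lemma 4 (key quantization lemma). Let `δ* > δ > 0` with `δ*/δ ∈ ℤ`, `x ∈ ℝⁿ`, and for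
each shift `r ∈ [-δ*/2, δ*/2)` let `xs r` be an arbitrary point of the lattice
`δ*ℤⁿ + r·1`. Then the expected squared error of quantization by random shift at
resolution `δ` satisfies
`E‖Q_δ(x) - x‖₂² ≤ (δ/δ*)·E_r‖xs r - x‖₂²`. -/
theorem quant_err_le_opt_rel_shift (n : ℕ) (δ δs : ℝ) (hδ : 0 < δ) (hδs : δ < δs)
    (hint : ∃ k : ℤ, δs / δ = (k : ℝ))
    (x : Fin n → ℝ) (xs : ℝ → (Fin n → ℝ))
    (hlattice : ∀ r ∈ Set.Ico (-δs/2) (δs/2), ∀ i, ∃ k : ℤ, xs r i = δs * (k : ℝ) + r)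
    (hintegrable : IntegrableOn (fun r => ∑ i, (xs r i - x i) ^ 2)
      (Set.Ico (-δs/2) (δs/2)) volume) :
    (1 / δ) * ∫ r' in Set.Ico (-δ/2) (δ/2),
        ∑ i, (δ * ((round ((x i - r') / δ) : ℤ) : ℝ) + r' - x i) ^ 2
      ≤ (δ / δs) * ((1 / δs) * ∫ r in Set.Ico (-δs/2) (δs/2),
        ∑ i, (xs r i - x i) ^ 2) := by
  have hδs0 : 0 < δs := hδ.trans hδs
  have hLHS : (∫ r' in Set.Ico (-δ/2) (δ/2),
      ∑ i, (δ * ((round ((x i - r') / δ) : ℤ) : ℝ) + r' - x i) ^ 2)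
      = (n : ℝ) * (δ ^ 3 / 12) := by
    rw [integral_finset_sum _ (fun i _ => saw_integrable δ (x i) _ _ hδ)]
    simp only [saw_integral δ _ hδ]
    simp [Finset.card_univ]
  have hsawint : ∀ i : Fin n, IntegrableOn
      (fun r : ℝ => (δs * ((round ((x i - r) / δs) : ℤ) : ℝ) + r - x i) ^ 2)
      (Set.Ico (-δs/2) (δs/2)) volume := fun i => saw_integrable δs (x i) _ _ hδs0
  have hmono : (∫ r in Set.Ico (-δs/2) (δs/2),
      ∑ i, (δs * ((round ((x i - r) / δs) : ℤ) : ℝ) + r - x i) ^ 2)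
      ≤ ∫ r in Set.Ico (-δs/2) (δs/2), ∑ i, (xs r i - x i) ^ 2 := by
    refine setIntegral_mono_on (integrable_finset_sum _ (fun i _ => hsawint i))
      hintegrable measurableSet_Ico ?_
    intro r hr
    refine Finset.sum_le_sum (fun i _ => ?_)
    obtain ⟨k, hk⟩ := hlattice r hr i
    have e1 : δs * ((round ((x i - r) / δs) : ℤ) : ℝ) + r - x i
        = δs * ((round ((x i - r) / δs) : ℤ) : ℝ) - (x i - r) := by ring
    have e2 : xs r i - x i = δs * (k : ℝ) - (x i - r) := by rw [hk]; ring
    rw [e1, e2]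
    exact saw_pt_le δs (x i - r) hδs0 k
  have hsaws : (∫ r in Set.Ico (-δs/2) (δs/2),
      ∑ i, (δs * ((round ((x i - r) / δs) : ℤ) : ℝ) + r - x i) ^ 2)
      = (n : ℝ) * (δs ^ 3 / 12) := by
    rw [integral_finset_sum _ (fun i _ => hsawint i)]
    simp only [saw_integral δs _ hδs0]
    simp [Finset.card_univ]
  rw [hsaws] at hmono
  rw [hLHS]
  have h1 : (1 / δ) * ((n : ℝ) * (δ ^ 3 / 12)) = (n : ℝ) * δ ^ 2 / 12 := by
    field_simp
  rw [h1]
  have h2 : (δ / δs) * ((1 / δs) * ((n : ℝ) * (δs ^ 3 / 12))) = (n : ℝ) * (δ * δs) / 12 := by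
    field_simp
  have h3 : (n : ℝ) * δ ^ 2 / 12 ≤ (n : ℝ) * (δ * δs) / 12 := by
    have : (0:ℝ) ≤ n := Nat.cast_nonneg n
    nlinarith [mul_le_mul_of_nonneg_left hδs.le hδ.le, mul_le_mul_of_nonneg_left (mul_le_mul_of_nonneg_left hδs.le hδ.le) this]
  refine h3.trans ?_
  rw [← h2]
  have hc : 0 ≤ (δ / δs) * (1 / δs) := by positivity
  calc (δ / δs) * ((1 / δs) * ((n : ℝ) * (δs ^ 3 / 12)))
      = (δ / δs) * (1 / δs) * ((n : ℝ) * (δs ^ 3 / 12)) := by ring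
    _ ≤ (δ / δs) * (1 / δs) * (∫ r in Set.Ico (-δs/2) (δs/2), ∑ i, (xs r i - x i) ^ 2) :=
        mul_le_mul_of_nonneg_left hmono hc
    _ = (δ / δs) * ((1 / δs) * ∫ r in Set.Ico (-δs/2) (δs/2), ∑ i, (xs r i - x i) ^ 2) := by
        ring
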